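/- Every positive integer n satisfying σ₂(n) − n² = 3n is of the form n = F_{2k−1} · F_{2k+1} for some integer k ≥ 1, where both F_{2k−1} and F_{2k+1} are prime numbers. -/

import Mathlib

open ArithmeticFunction Finset
open scoped ArithmeticFunction.sigma

lemma fib_jump (n : ℕ) : Nat.fib (n+4) + Nat.fib n = 3 * Nat.fib (n+2) := by
  have h1 : Nat.fib (n+4) = Nat.fib (n+2) + Nat.fib (n+3) := Nat.fib_add_two (n := n+2)
  have h2 : Nat.fib (n+3) = Nat.fib (n+1) + Nat.fib (n+2) := Nat.fib_add_two (n := n+1)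
  have h3 : Nat.fib (n+2) = Nat.fib n + Nat.fib (n+1) := Nat.fib_add_two (n := n)
  omega

lemma markov : ∀ y x : ℕ, x ≤ y → x^2 + y^2 + 1 = 3*x*y →
    (x = 1 ∧ y = 1) ∨ ∃ k, 1 ≤ k ∧ x = Nat.fib (2*k-1) ∧ y = Nat.fib (2*k+1) := by
  intro y
  induction y using Nat.strong_induction_on with
  | _ y ih =>
    intro x hxy heq
    have hx1 : 1 ≤ x := by nlinarith
    rcases eq_or_lt_of_le hxy with rfl | hlt
    · left; constructor <;> nlinarith
    · have hy3x : y < 3 * x := by nlinarith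
      set z := 3 * x - y with hz
      have hyz : y + z = 3 * x := by omega
      have hzeq : z^2 + x^2 + 1 = 3*z*x := by nlinarith
      have hzy : z * y = x^2 + 1 := by nlinarith
      have hzx : z ≤ x := by nlinarith
      rcases ih x hlt z hzx hzeq with ⟨hz1, hx1'⟩ | ⟨k, hk, hzf, hxf⟩
      · right
        obtain ⟨rfl, rfl⟩ : x = 1 ∧ y = 2 := by omega
        exact ⟨1, le_refl 1, by decide, by decide⟩
      · right
        refine ⟨k + 1, by omega, ?_, ?_⟩
        · rw [show 2*(k+1)-1 = 2*k+1 from by omega]; exact hxf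
        · have := fib_jump (2*k-1)
          have h1 : 2*k-1+4 = 2*(k+1)+1 := by omega
          have h2 : 2*k-1+2 = 2*k+1 := by omega
          rw [h1, h2] at this
          omega

theorem stmt_11 (n : ℕ) (hn : 0 < n)
    (heq : ((ArithmeticFunction.sigma 2) n : ℤ) - (n : ℤ) ^ 2 = 3 * n) :
    ∃ k : ℕ, 1 ≤ k ∧ n = Nat.fib (2 * k - 1) * Nat.fib (2 * k + 1) ∧
      (Nat.fib (2 * k - 1)).Prime ∧ (Nat.fib (2 * k + 1)).Prime := by
  have hσ : (σ 2) n = n ^ 2 + 3 * n := by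
    have : ((σ 2) n : ℤ) = (n : ℤ)^2 + 3*n := by linarith
    exact_mod_cast this
  have hn1 : 1 < n := by
    rcases Nat.lt_or_ge n 2 with h | h
    · interval_cases n
      rw [(isMultiplicative_sigma (k := 2)).map_one] at hσ
      omega
    · omega
  -- sum over proper divisors
  have hmem : n ∈ n.divisors := Nat.mem_divisors_self n hn.ne'
  have hsum : ∑ d ∈ n.divisors.erase n, d ^ 2 = 3 * n := by
    have h := Finset.add_sum_erase _ (fun d => d ^ 2) hmem
    beta_reduce at h
    rw [sigma_apply] at hσ
    omega
  have hσp : ∀ q : ℕ, q.Prime → (σ 2) q = 1 + q ^ 2 := by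
    intro q hq
    have h := sigma_apply_prime_pow (k := 2) (i := 1) hq
    rw [pow_one] at h
    rw [h]
    simp [Finset.sum_range_succ]
  obtain ⟨p, hpdef⟩ : ∃ p, n.minFac = p := ⟨_, rfl⟩
  have hp : p.Prime := hpdef ▸ Nat.minFac_prime hn1.ne'
  obtain ⟨m, hmdef⟩ : ∃ m, n / p = m := ⟨_, rfl⟩
  have hpm : p * m = n := by rw [← hpdef, ← hmdef, hpdef]; exact Nat.mul_div_cancel' (hpdef ▸ n.minFac_dvd)
  have hm0 : 0 < m := by rw [← hmdef]; exact Nat.div_pos (hpdef ▸ Nat.minFac_le hn) hp.pos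
  have hmn : m < n := by rw [← hmdef]; exact Nat.div_lt_self hn hp.one_lt
  have hmdvd : m ∣ n := by rw [← hmdef]; exact Nat.div_dvd_of_dvd (hpdef ▸ n.minFac_dvd)
  have hmmem : m ∈ n.divisors.erase n :=
    Finset.mem_erase.mpr ⟨hmn.ne, Nat.mem_divisors.mpr ⟨hmdvd, hn.ne'⟩⟩
  have hm2 : m ^ 2 ≤ 3 * n :=
    hsum ▸ Finset.single_le_sum (f := fun d => d ^ 2) (fun _ _ => Nat.zero_le _) hmmem
  have hm3p : m ≤ 3 * p := by nlinarith [hpm]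
  by_cases hm1 : m = 1
  · -- n is prime : contradiction
    exfalso
    subst hm1
    have hnp : n.Prime := by rwa [← hpm, mul_one]
    rw [hσp n hnp] at hσ
    omega
  by_cases hmp : m.Prime
  · by_cases hmpe : m = p
    · -- n = p ^ 2 : contradiction
      exfalso
      subst hmpe
      have hn2 : n = m ^ 2 := by rw [← hpm]; ring
      rw [hn2, sigma_apply_prime_pow (k := 2) (i := 2) hmp] at hσ
      simp [Finset.sum_range_succ] at hσ
      have := hmp.two_le
      nlinarith
    · -- n = p * q with distinct primes
      have hco : Nat.Coprime p m := (Nat.coprime_primes hp hmp).mpr (Ne.symm hmpe)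
      have hσn : (σ 2) n = (1 + p ^ 2) * (1 + m ^ 2) := by
        rw [← hpm, isMultiplicative_sigma.map_mul_of_coprime hco, hσp p hp, hσp m hmp]
      rw [hσn, ← hpm] at hσ
      have hmarkov : p ^ 2 + m ^ 2 + 1 = 3 * p * m := by nlinarith
      have hpq : p ≤ m := hpdef ▸ Nat.minFac_le_of_dvd hmp.two_le hmdvd
      rcases markov m p hpq hmarkov with ⟨h1, _⟩ | ⟨k, hk, hpf, hmf⟩
      · exact absurd h1 hp.one_lt.ne'
      · exact ⟨k, hk, by rw [← hpf, ← hmf, ← hpm], hpf ▸ hp, hmf ▸ hmp⟩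
  · -- m composite : p ^ 2 ≤ m ≤ 3 p, finite check
    exfalso
    have hr : m.minFac.Prime := Nat.minFac_prime hm1
    have hrm : m.minFac ∣ m := Nat.minFac_dvd m
    have hpr : p ≤ m.minFac := hpdef ▸ Nat.minFac_le_of_dvd hr.two_le (hrm.trans hmdvd)
    obtain ⟨q, hqdef⟩ : ∃ q, m / m.minFac = q := ⟨_, rfl⟩
    have hrm' : m.minFac * q = m := by rw [← hqdef]; exact Nat.mul_div_cancel' hrm
    have hq1 : q ≠ 1 := by
      intro h
      rw [h, mul_one] at hrm'
      exact hmp (hrm' ▸ hr)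
    have hq0 : q ≠ 0 := by
      intro h
      rw [h, mul_zero] at hrm'
      omega
    have hpq2 : p ≤ q := hpdef ▸
      Nat.minFac_le_of_dvd (by omega) ((hqdef ▸ Nat.div_dvd_of_dvd hrm).trans hmdvd)
    have hpsq : p * p ≤ m := by calc p * p ≤ m.minFac * q := Nat.mul_le_mul hpr hpq2
                                    _ = m := hrm'
    have hp2 := hp.two_le
    have hp3 : p ≤ 3 := by nlinarith
    have hnval : n = 8 ∨ n = 12 ∨ n = 27 := by
      have hcase : p = 2 ∨ p = 3 := by
        rcases Nat.lt_or_ge p 3 with h | h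
        · left; omega
        · right; omega
      rcases hcase with h2 | h3
      · subst h2
        have h5 : m ≠ 5 := fun h => hmp (h ▸ by norm_num)
        omega
      · subst h3
        omega
    rcases hnval with h | h | h <;> rw [h] at hσ
    · rw [show (σ 2) 8 = 85 from by decide] at hσ; omega
    · rw [show (σ 2) 12 = 210 from by decide] at hσ; omega
    · rw [show (σ 2) 27 = 820 from by decide] at hσ; omega
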